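/- Let X₁,...,X_T be real random variables adapted to a filtration with X_t ≤ R and E[X_t | X_1,...,X_{t-1}] = 0 for all t. Let S = Σ X_t and V = Σ E[X_t² | X_1,...,X_{t-1}]. Then for any δ > 0 and any fixed V' with 0 ≤ V' ≤ R² ln(1/δ)/(e-2), with probability at least 1-δ, S ≤ R ln(1/δ) + (e-2)V/R. -/

import Mathlib

open MeasureTheory Nat

lemma exp_series_split (x : ℝ) :
    Real.exp x = 1 + x + ∑' n : ℕ, x ^ (n + 2) / ((n + 2)! : ℝ) := by
  have hs : Summable (fun n : ℕ => x ^ n / (n ! : ℝ)) := Real.summable_pow_div_factorial x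
  have h := Summable.sum_add_tsum_nat_add 2 hs
  have h2 : Real.exp x = ∑' n : ℕ, x ^ n / (n ! : ℝ) := by
    simp [Real.exp_eq_exp_ℝ, NormedSpace.exp_eq_tsum_div]
  rw [h2, ← h]
  simp [Finset.sum_range_succ]

lemma exp_le_quad {x : ℝ} (hx : x ≤ 1) :
    Real.exp x ≤ 1 + x + (Real.exp 1 - 2) * x ^ 2 := by
  have he2 : Real.exp 1 - 2 = ∑' n : ℕ, (1 : ℝ) ^ (n + 2) / ((n + 2)! : ℝ) := by
    have := exp_series_split 1
    linarith
  rcases le_or_gt 0 x with h0 | h0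
  · rw [exp_series_split x]
    have hsum1 : Summable (fun n : ℕ => x ^ (n + 2) / ((n + 2)! : ℝ)) :=
      ((Real.summable_pow_div_factorial x).comp_injective (add_left_injective 2))
    have hsum2 : Summable (fun n : ℕ => (1:ℝ) ^ (n + 2) / ((n + 2)! : ℝ)) :=
      ((Real.summable_pow_div_factorial 1).comp_injective (add_left_injective 2))
    have hterm : ∀ n : ℕ, x ^ (n + 2) / ((n + 2)! : ℝ) ≤ x ^ 2 * ((1:ℝ) ^ (n + 2) / ((n + 2)! : ℝ)) := by
      intro n
      rw [one_pow, mul_one_div, div_le_div_iff_of_pos_right (by positivity)]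
      calc x ^ (n + 2) = x ^ 2 * x ^ n := by ring
        _ ≤ x ^ 2 * 1 := mul_le_mul_of_nonneg_left (pow_le_one₀ h0 hx) (by positivity)
        _ = x ^ 2 := mul_one _
    have := Summable.tsum_le_tsum hterm hsum1 (hsum2.mul_left (x ^ 2))
    rw [tsum_mul_left] at this
    nlinarith [sq_nonneg x]
  · rcases le_or_gt x (-1) with hm | hm
    · have h1 : Real.exp x ≤ Real.exp (-1) := Real.exp_le_exp.2 hm
      have he : Real.exp 1 > 2.7182818283 := Real.exp_one_gt_d9
      have hinv : Real.exp (-1) ≤ 0.37 := by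
        rw [Real.exp_neg]
        rw [inv_le_comm₀ (Real.exp_pos 1) (by norm_num)]
        linarith
      nlinarith [sq_nonneg (x + 0.7), sq_nonneg x]
    · have hb := Real.exp_bound (x := x) (by rw [abs_le]; constructor <;> linarith) (n := 4) (by norm_num)
      have he : Real.exp 1 > 2.7182818283 := Real.exp_one_gt_d9
      rw [abs_le] at hb
      simp [Finset.sum_range_succ] at hb
      obtain ⟨hb1, hb2⟩ := hb
      have hax : |x| ^ 4 = x ^ 4 := by
        rw [← abs_pow, abs_of_nonneg (by positivity)]
      rw [hax] at hb2
      norm_num [Nat.factorial] at hb1 hb2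
      have hx2 : x ^ 2 ≤ 1 := by nlinarith
      have hx3 : x ^ 3 ≤ 0 := by nlinarith [sq_nonneg x]
      have hx4 : x ^ 4 ≤ x ^ 2 := by nlinarith [sq_nonneg x]
      nlinarith [sq_nonneg x]

theorem stmt_2 {Ω : Type*} {m0 : MeasurableSpace Ω} {μ : Measure Ω} [IsProbabilityMeasure μ]
    (ℱ : Filtration ℕ m0) (T : ℕ) (X : ℕ → Ω → ℝ) (R : ℝ) (hR : 0 < R)
    (hadapt : ∀ t, StronglyMeasurable[ℱ t] (X t))
    (hbdd : ∀ t ω, X t ω ≤ R)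
    (hint : ∀ t, Integrable (X t) μ)
    (hint2 : ∀ t, Integrable (fun ω => X t ω ^ 2) μ)
    (hmds : ∀ t, 1 ≤ t → t ≤ T → μ[X t|ℱ (t - 1)] =ᵐ[μ] 0)
    (δ : ℝ) (hδ : 0 < δ) (V' : ℝ)
    (hV'0 : 0 ≤ V') (hV' : V' ≤ R ^ 2 * Real.log (1 / δ) / (Real.exp 1 - 2)) :
    ENNReal.ofReal (1 - δ) ≤
      μ {ω | ∑ t ∈ Finset.Icc 1 T, X t ω ≤
        R * Real.log (1 / δ) +
          (Real.exp 1 - 2) * (∑ t ∈ Finset.Icc 1 T, (μ[fun ω' => X t ω' ^ 2|ℱ (t - 1)]) ω) / R} := by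
  classical
  rcases le_or_gt 1 δ with hδ1 | hδ1
  · calc ENNReal.ofReal (1 - δ) = 0 := by
          rw [ENNReal.ofReal_eq_zero]; linarith
      _ ≤ _ := _root_.zero_le
  set c : ℝ := Real.exp 1 - 2 with hc_def
  have hc : 0 < c := by
    have := Real.exp_one_gt_d9; simp only [hc_def]; linarith
  set V : ℕ → Ω → ℝ := fun t => μ[fun ω' => X t ω' ^ 2|ℱ (t - 1)] with hV_def
  set S : ℕ → Ω → ℝ := fun n ω => ∑ t ∈ Finset.Icc 1 n, X t ω with hS_def
  set W : ℕ → Ω → ℝ := fun n ω => ∑ t ∈ Finset.Icc 1 n, V t ω with hW_def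
  set Z : ℕ → Ω → ℝ := fun n ω => Real.exp (S n ω / R - c / R ^ 2 * W n ω) with hZ_def
  -- a.e. nonnegativity of all V t
  have hae : ∀ᵐ ω ∂μ, ∀ t, 0 ≤ V t ω :=
    ae_all_iff.2 fun t => condExp_nonneg (ae_of_all μ fun ω => by positivity)
  have hVmeas : ∀ t, StronglyMeasurable[ℱ (t - 1)] (V t) := fun t => stronglyMeasurable_condExp
  have hSmeas : ∀ n, StronglyMeasurable[ℱ n] (S n) := by
    intro n
    apply Finset.stronglyMeasurable_fun_sum
    intro t ht
    exact (hadapt t).mono (ℱ.mono (Finset.mem_Icc.1 ht).2)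
  have hWmeas : ∀ n k, n ≤ k + 1 → StronglyMeasurable[ℱ k] (W n) := by
    intro n k hnk
    apply Finset.stronglyMeasurable_fun_sum
    intro t ht
    exact (hVmeas t).mono (ℱ.mono (by have := (Finset.mem_Icc.1 ht); omega))
  have hZmeas : ∀ n, StronglyMeasurable[ℱ n] (Z n) := by
    intro n
    exact Real.continuous_exp.comp_stronglyMeasurable
      (((hSmeas n).mul_const R⁻¹).sub ((hWmeas n n (by omega)).const_mul (c / R ^ 2)))
  have hSle : ∀ n ω, S n ω ≤ n * R := by
    intro n ω
    calc S n ω ≤ ∑ t ∈ Finset.Icc 1 n, R := Finset.sum_le_sum fun t _ => hbdd t ω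
      _ = n * R := by simp [Nat.card_Icc]
  have hZint : ∀ n, Integrable (Z n) μ := by
    intro n
    apply Integrable.mono' (integrable_const (Real.exp n))
      ((hZmeas n).mono (ℱ.le n)).aestronglyMeasurable
    filter_upwards [hae] with ω hω
    rw [Real.norm_eq_abs, abs_of_pos (Real.exp_pos _), Real.exp_le_exp]
    have hWnn : 0 ≤ W n ω := Finset.sum_nonneg fun t _ => hω t
    have h1 : S n ω / R ≤ n := by
      rw [div_le_iff₀ hR]; exact hSle n ω
    nlinarith [mul_nonneg (div_nonneg hc.le (sq_nonneg R)) hWnn]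
  -- the key induction
  have key : ∀ n, n ≤ T → ∫ ω, Z n ω ∂μ ≤ 1 := by
    intro n
    induction n with
    | zero =>
      intro _
      have : Z 0 = fun _ => (1 : ℝ) := by
        funext ω; simp [hZ_def, hS_def, hW_def]
      rw [this]
      simp
    | succ m ih =>
      intro hm1
      set G : Ω → ℝ := fun ω => Real.exp (X (m + 1) ω / R) with hG_def
      set A : Ω → ℝ := fun ω => Real.exp (S m ω / R - c / R ^ 2 * W (m + 1) ω) with hA_def
      have hGint : Integrable G μ := by
        apply Integrable.mono' (integrable_const (Real.exp 1))
          (Real.continuous_exp.comp_stronglyMeasurable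
            (((hadapt (m + 1)).mono (ℱ.le _)).mul_const R⁻¹)).aestronglyMeasurable
        refine ae_of_all μ fun ω => ?_
        rw [Real.norm_eq_abs, abs_of_pos (Real.exp_pos _), Real.exp_le_exp]
        exact (div_le_one hR).2 (hbdd _ ω)
      have hAmeas : StronglyMeasurable[ℱ m] A :=
        Real.continuous_exp.comp_stronglyMeasurable
          (((hSmeas m).mul_const R⁻¹).sub ((hWmeas (m + 1) m le_rfl).const_mul (c / R ^ 2)))
      have hSsplit : ∀ ω, S (m + 1) ω = S m ω + X (m + 1) ω := by
        intro ω
        simp only [hS_def]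
        rw [← Finset.insert_Icc_right_eq_Icc_add_one (by omega), Finset.sum_insert (by simp)]
        ring
      have hWsplit : ∀ ω, W (m + 1) ω = W m ω + V (m + 1) ω := by
        intro ω
        simp only [hW_def]
        rw [← Finset.insert_Icc_right_eq_Icc_add_one (by omega), Finset.sum_insert (by simp)]
        ring
      have hZeq : Z (m + 1) = A * G := by
        funext ω
        simp only [hZ_def, hA_def, hG_def, Pi.mul_apply]
        rw [hSsplit ω, ← Real.exp_add]
        congr 1
        ring
      have hAGint : Integrable (A * G) μ := hZeq ▸ hZint (m + 1)
      have h_pull : μ[Z (m + 1)|ℱ m] =ᵐ[μ] A * μ[G|ℱ m] := by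
        rw [hZeq]
        exact condExp_mul_of_stronglyMeasurable_left hAmeas hAGint hGint
      -- conditional bound on G
      set F3 : Ω → ℝ := fun ω => 1 + (1 / R) * X (m + 1) ω + c / R ^ 2 * X (m + 1) ω ^ 2 with hF3_def
      have hpt : ∀ ω, G ω ≤ F3 ω := by
        intro ω
        have h1 : X (m + 1) ω / R ≤ 1 := (div_le_one hR).2 (hbdd _ ω)
        have h2 := exp_le_quad h1
        simp only [hG_def, hF3_def]
        calc Real.exp (X (m + 1) ω / R)
            ≤ 1 + X (m + 1) ω / R + c * (X (m + 1) ω / R) ^ 2 := h2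
          _ = 1 + (1 / R) * X (m + 1) ω + c / R ^ 2 * X (m + 1) ω ^ 2 := by
              field_simp
      have hF3int : Integrable F3 μ := by
        apply Integrable.add
        · apply Integrable.add (integrable_const 1)
          exact (hint (m + 1)).const_mul (1 / R)
        · exact (hint2 (m + 1)).const_mul (c / R ^ 2)
      have hF3eq : F3 = (fun _ => (1 : ℝ)) + ((1 / R) • X (m + 1)) +
          ((c / R ^ 2) • fun ω => X (m + 1) ω ^ 2) := by
        funext ω
        simp [hF3_def]
      have h_condF3 : μ[F3|ℱ m] =ᵐ[μ] fun ω => 1 + c / R ^ 2 * V (m + 1) ω := by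
        rw [hF3eq]
        have e1 := condExp_add (μ := μ) (m := ℱ m)
          ((integrable_const (1:ℝ)).add ((hint (m + 1)).smul (1 / R)))
          ((hint2 (m + 1)).smul (c / R ^ 2))
        have e2 := condExp_add (μ := μ) (m := ℱ m)
          (integrable_const (1:ℝ)) ((hint (m + 1)).smul (1 / R))
        have e3 := condExp_smul (μ := μ) (m := ℱ m) (1 / R) (X (m + 1))
        have e4 := condExp_smul (μ := μ) (m := ℱ m) (c / R ^ 2) (fun ω => X (m + 1) ω ^ 2)
        have e5 : μ[X (m + 1)|ℱ m] =ᵐ[μ] 0 := hmds (m + 1) (by omega) hm1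
        have e6 : μ[fun _ : Ω => (1:ℝ)|ℱ m] = fun _ => (1:ℝ) := condExp_const (ℱ.le m) 1
        filter_upwards [e1, e2, e3, e4, e5] with ω h1 h2 h3 h4 h5
        simp only [Pi.add_apply] at h1 h2 ⊢
        rw [h1, h2, h3, h4, e6]
        simp only [Pi.smul_apply, smul_eq_mul, h5, Pi.zero_apply, mul_zero, add_zero]
        have hVeq : V (m + 1) ω = (μ[fun ω' => X (m + 1) ω' ^ 2|ℱ m]) ω := rfl
        rw [hVeq]
      have h_cond : μ[G|ℱ m] ≤ᵐ[μ] fun ω => Real.exp (c / R ^ 2 * V (m + 1) ω) := by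
        have h1 : μ[G|ℱ m] ≤ᵐ[μ] μ[F3|ℱ m] :=
          condExp_mono hGint hF3int (ae_of_all μ hpt)
        filter_upwards [h1, h_condF3] with ω hω1 hω2
        calc (μ[G|ℱ m]) ω ≤ (μ[F3|ℱ m]) ω := hω1
          _ = 1 + c / R ^ 2 * V (m + 1) ω := hω2
          _ ≤ Real.exp (c / R ^ 2 * V (m + 1) ω) := by
              have := Real.add_one_le_exp (c / R ^ 2 * V (m + 1) ω)
              linarith
      have h_step : μ[Z (m + 1)|ℱ m] ≤ᵐ[μ] Z m := by
        filter_upwards [h_pull, h_cond] with ω h1 h2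
        rw [h1]
        simp only [Pi.mul_apply]
        calc A ω * (μ[G|ℱ m]) ω ≤ A ω * Real.exp (c / R ^ 2 * V (m + 1) ω) :=
              mul_le_mul_of_nonneg_left h2 (Real.exp_pos _).le
          _ = Z m ω := by
              simp only [hA_def, hZ_def]
              rw [← Real.exp_add]
              congr 1
              rw [hWsplit ω]
              ring
      calc ∫ ω, Z (m + 1) ω ∂μ = ∫ ω, (μ[Z (m + 1)|ℱ m]) ω ∂μ :=
            (integral_condExp (ℱ.le m)).symm
        _ ≤ ∫ ω, Z m ω ∂μ := integral_mono_ae integrable_condExp (hZint m) h_step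
        _ ≤ 1 := ih (by omega)
  -- Markov step
  set L : ℝ := Real.log (1 / δ) with hL_def
  set E : Set Ω := {ω | S T ω ≤ R * L + c * W T ω / R} with hE_def
  have hmeasE : MeasurableSet E := by
    apply measurableSet_le
    · exact ((hSmeas T).mono (ℱ.le T)).measurable
    · exact (measurable_const.add ((((hWmeas T T (by omega)).mono
        (ℱ.le T)).measurable.const_mul c).div_const R))
  have hsub : Eᶜ ⊆ {ω | 1 / δ ≤ Z T ω} := by
    intro ω hω
    simp only [hE_def, Set.mem_compl_iff, Set.mem_setOf_eq, not_le] at hω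
    simp only [Set.mem_setOf_eq, hZ_def]
    have hLe : Real.exp L = 1 / δ := Real.exp_log (by positivity)
    rw [← hLe, Real.exp_le_exp, le_sub_iff_add_le, le_div_iff₀ hR]
    have heq : (L + c / R ^ 2 * W T ω) * R = R * L + c * W T ω / R := by
      field_simp
    rw [heq]
    exact hω.le
  have hmarkov := mul_meas_ge_le_integral_of_nonneg
    (ae_of_all μ fun ω => (Real.exp_pos _).le) (hZint T) (1 / δ)
  have hZT1 : ∫ ω, Z T ω ∂μ ≤ 1 := key T le_rfl
  have htoReal : (μ Eᶜ).toReal ≤ δ := by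
    have h1 : (μ {ω | 1 / δ ≤ Z T ω}).toReal ≤ δ := by
      have h2 : (1 / δ) * (μ {ω | 1 / δ ≤ Z T ω}).toReal ≤ 1 := le_trans hmarkov hZT1
      have h3 := mul_le_mul_of_nonneg_left h2 hδ.le
      have hxe : δ * (1 / δ * (μ {ω | 1 / δ ≤ Z T ω}).toReal)
          = (μ {ω | 1 / δ ≤ Z T ω}).toReal := by
        field_simp
      rw [hxe, mul_one] at h3
      exact h3
    calc (μ Eᶜ).toReal ≤ (μ {ω | 1 / δ ≤ Z T ω}).toReal := by
          apply ENNReal.toReal_mono (measure_ne_top μ _) (measure_mono hsub)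
      _ ≤ δ := h1
  have hcompl : μ Eᶜ ≤ ENNReal.ofReal δ :=
    (ENNReal.le_ofReal_iff_toReal_le (measure_ne_top μ _) hδ.le).2 htoReal
  have hsum : μ E + μ Eᶜ = 1 := by
    rw [measure_add_measure_compl hmeasE, measure_univ]
  have hgoal : ENNReal.ofReal (1 - δ) ≤ μ E := by
    rw [ENNReal.ofReal_sub 1 hδ.le, ENNReal.ofReal_one]
    calc (1 : ENNReal) - ENNReal.ofReal δ ≤ 1 - μ Eᶜ := tsub_le_tsub_left hcompl 1
      _ ≤ μ E := by
          rw [tsub_le_iff_right]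
          exact hsum.ge
  exact hgoal
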